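/- Let μ₁, μ₂ be Borel probability measures on ℝ with compact support, neither a Dirac point mass, and let μ = μ₁ * μ₂ be their convolution. If Λ ⊂ ℝ (with 0 ∈ Λ) is such that {e^{2πiλx}}_{λ∈Λ} is orthogonal in L²(μ₁), then it is also orthogonal in L²(μ), but it is not an orthonormal basis of L²(μ). -/

import Mathlib

open MeasureTheory Complex

noncomputable def ch (u x : ℝ) : ℂ := Complex.exp (2 * Real.pi * Complex.I * (u * x))

lemma ch_norm (u x : ℝ) : ‖ch u x‖ = 1 := by
  simp [ch, Complex.norm_exp]

lemma ch_continuous (u : ℝ) : Continuous (ch u) := by unfold ch; fun_prop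

lemma ch_zero (x : ℝ) : ch 0 x = 1 := by simp [ch]

lemma ch_addx (u a b : ℝ) : ch u (a + b) = ch u a * ch u b := by
  rw [ch, ch, ch, ← Complex.exp_add]; congr 1; push_cast; ring

lemma ch_conj (u x : ℝ) : (starRingEnd ℂ) (ch u x) = ch (-u) x := by
  rw [ch, ch, ← Complex.exp_conj]; congr 1
  simp only [map_mul, Complex.conj_I, Complex.conj_ofReal, map_ofNat]
  push_cast; ring

lemma ch_conj_mul (u w x : ℝ) : (starRingEnd ℂ) (ch u x) * ch w x = ch (w - u) x := by
  rw [ch, ch, ch, ← Complex.exp_conj, ← Complex.exp_add]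
  congr 1
  simp only [map_mul, Complex.conj_I, Complex.conj_ofReal, map_ofNat]
  push_cast; ring

lemma ch_eq_iff {u x y : ℝ} (h : ch u x = ch u y) : ∃ n : ℤ, u * (x - y) = n := by
  rw [ch, ch, Complex.exp_eq_exp_iff_exists_int] at h
  obtain ⟨n, hn⟩ := h
  refine ⟨n, ?_⟩
  have hπ : (2 * (Real.pi:ℂ) * Complex.I) ≠ 0 := by
    simp [Real.pi_ne_zero, Complex.I_ne_zero]
  have h2 : (2 * (Real.pi:ℂ) * Complex.I) * ((u:ℂ) * x - (u:ℂ) * y - (n:ℂ)) = 0 := by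
    linear_combination hn
  rcases mul_eq_zero.mp h2 with h3 | h3
  · exact absurd h3 hπ
  · have h4 : ((u * (x - y) : ℝ):ℂ) = ((n:ℝ):ℂ) := by push_cast; linear_combination h3
    exact_mod_cast h4

noncomputable def A (ν : Measure ℝ) (u : ℝ) : ℂ := ∫ x, ch u x ∂ν

lemma ch_memℒp {ν : Measure ℝ} [IsProbabilityMeasure ν] (u : ℝ) (p : ENNReal) : MemLp (ch u) p ν :=
  MemLp.of_bound (ch_continuous u).aestronglyMeasurable 1
    (Filter.Eventually.of_forall fun x => (ch_norm u x).le)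

lemma ch_integrable {ν : Measure ℝ} [IsProbabilityMeasure ν] (u : ℝ) : Integrable (ch u) ν :=
  memLp_one_iff_integrable.mp (ch_memℒp u 1)

lemma A_zero (ν : Measure ℝ) [IsProbabilityMeasure ν] : A ν 0 = 1 := by
  simp [A, ch_zero]

lemma A_norm_le (ν : Measure ℝ) [IsProbabilityMeasure ν] (u : ℝ) : ‖A ν u‖ ≤ 1 := by
  calc ‖A ν u‖ ≤ ∫ x, ‖ch u x‖ ∂ν := norm_integral_le_integral_norm _
  _ = 1 := by
      rw [integral_congr_ae (Filter.Eventually.of_forall fun x => ch_norm u x)]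
      simp

lemma A_neg (ν : Measure ℝ) [IsProbabilityMeasure ν] (u : ℝ) :
    A ν (-u) = (starRingEnd ℂ) (A ν u) := by
  rw [A, A, ← integral_conj]
  exact integral_congr_ae (Filter.Eventually.of_forall fun x => (ch_conj u x).symm)

lemma A_continuousAt (ν : Measure ℝ) [IsProbabilityMeasure ν] : ContinuousAt (A ν) 0 := by
  apply continuousAt_of_dominated (bound := fun _ => 1)
  · exact Filter.Eventually.of_forall fun u => (ch_continuous u).aestronglyMeasurable
  · exact Filter.Eventually.of_forall fun u =>
      Filter.Eventually.of_forall fun x => (ch_norm u x).le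
  · exact integrable_const 1
  · exact Filter.Eventually.of_forall fun x => by
      have : Continuous fun u => ch u x := by unfold ch; fun_prop
      exact this.continuousAt

lemma A_conv (μ₁ μ₂ : Measure ℝ) [IsProbabilityMeasure μ₁] [IsProbabilityMeasure μ₂] (u : ℝ) :
    A (μ₁.conv μ₂) u = A μ₁ u * A μ₂ u := by
  rw [A, Measure.conv, integral_map (f := ch u) (by fun_prop)
    (ch_continuous u).aestronglyMeasurable]
  simp_rw [ch_addx]
  exact integral_prod_mul (ch u) (ch u)

lemma norm_one_re_one {z : ℂ} (h1 : ‖z‖ = 1) (h2 : z.re = 1) : z = 1 := by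
  have hn : Complex.normSq z = 1 := by
    rw [Complex.normSq_eq_norm_sq, h1]; norm_num
  rw [Complex.normSq_apply, h2] at hn
  have : z.im = 0 := by nlinarith
  exact Complex.ext (by simp [h2]) (by simp [this])

lemma ae_const_of_norm_A_eq_one {ν : Measure ℝ} [IsProbabilityMeasure ν] {u : ℝ}
    (h : ‖A ν u‖ = 1) : ∀ᵐ x ∂ν, ch u x = A ν u := by
  set c := A ν u with hc
  have hg : Integrable (fun x => ((starRingEnd ℂ) c * ch u x).re) ν :=
    ((ch_integrable u).const_mul _).re
  have hreint : Integrable (fun x => 1 - ((starRingEnd ℂ) c * ch u x).re) ν :=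
    (integrable_const (1:ℝ)).sub hg
  have hnorm1 : ∀ x : ℝ, ‖(starRingEnd ℂ) c * ch u x‖ = 1 := fun x => by
    rw [norm_mul, RCLike.norm_conj, h, ch_norm]; norm_num
  have hnonneg : 0 ≤ fun x => 1 - ((starRingEnd ℂ) c * ch u x).re := by
    intro x
    have hle : ((starRingEnd ℂ) c * ch u x).re ≤ ‖(starRingEnd ℂ) c * ch u x‖ :=
      Complex.re_le_norm _
    simp only [Pi.zero_apply]
    linarith [(hnorm1 x) ▸ hle]
  have hcc : (starRingEnd ℂ) c * c = 1 := by
    rw [mul_comm, Complex.mul_conj, Complex.normSq_eq_norm_sq, h]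
    norm_num
  have hint : ∫ x, (1 - ((starRingEnd ℂ) c * ch u x).re) ∂ν = 0 := by
    rw [integral_sub (integrable_const 1) hg]
    simp only [← RCLike.re_to_complex]
    rw [integral_re ((ch_integrable u).const_mul _)]
    rw [integral_const_mul, ← A, ← hc, hcc]
    simp
  have hae := (integral_eq_zero_iff_of_nonneg hnonneg hreint).mp hint
  filter_upwards [hae] with x hx
  simp only [Pi.zero_apply] at hx
  have hre : ((starRingEnd ℂ) c * ch u x).re = 1 := by linarith
  have heq := norm_one_re_one (hnorm1 x) hre
  calc ch u x = c * ((starRingEnd ℂ) c * ch u x) := by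
        rw [← mul_assoc, mul_comm c, hcc, one_mul]
  _ = c := by rw [heq, mul_one]

lemma eq_dirac_of_compl_singleton {ν : Measure ℝ} [IsProbabilityMeasure ν] {x₀ : ℝ}
    (h : ν {x₀}ᶜ = 0) : ν = Measure.dirac x₀ := by
  have hx1 : ν {x₀} = 1 := by
    have := measure_add_measure_compl (μ := ν) (measurableSet_singleton x₀)
    rw [h, add_zero] at this
    simpa using this
  ext s hs
  rw [Measure.dirac_apply' _ hs]
  by_cases hx : x₀ ∈ s
  · have hge : (1:ENNReal) ≤ ν s := hx1 ▸ measure_mono (Set.singleton_subset_iff.mpr hx)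
    have hle : ν s ≤ 1 := prob_le_one
    simp [Set.indicator_of_mem hx, le_antisymm hle hge]
  · have : s ⊆ {x₀}ᶜ := fun y hy => by
      simp only [Set.mem_compl_iff, Set.mem_singleton_iff]
      rintro rfl; exact hx hy
    simp [Set.indicator_of_notMem hx, measure_mono_null this h]

noncomputable def eL (ν : Measure ℝ) [IsProbabilityMeasure ν] (u : ℝ) : Lp ℂ 2 ν :=
  (ch_memℒp u 2).toLp (ch u)

lemma inner_eL (ν : Measure ℝ) [IsProbabilityMeasure ν] (u w : ℝ) :
    (inner ℂ (eL ν u) (eL ν w) : ℂ) = A ν (w - u) := by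
  rw [L2.inner_def]
  rw [integral_congr_ae (f := fun a => (inner ℂ ((eL ν u :  Lp ℂ 2 ν) a) ((eL ν w : Lp ℂ 2 ν) a) : ℂ))
    (g := fun a => ch (w - u) a)]
  · rfl
  · filter_upwards [MemLp.coeFn_toLp (ch_memℒp u 2) (μ := ν),
      MemLp.coeFn_toLp (ch_memℒp w 2) (μ := ν)] with x h1 h2
    simp only [eL] at h1 h2 ⊢
    rw [h1, h2, RCLike.inner_apply', ch_conj_mul]

lemma inner_eL_g (ν : Measure ℝ) [IsProbabilityMeasure ν] (u : ℝ) (g : Lp ℂ 2 ν) :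
    (inner ℂ (eL ν u) g : ℂ) = ∫ x, (g : ℝ → ℂ) x * (starRingEnd ℂ) (ch u x) ∂ν := by
  rw [L2.inner_def]
  apply integral_congr_ae
  filter_upwards [MemLp.coeFn_toLp (ch_memℒp u 2) (μ := ν)] with x h1
  rw [show ((eL ν u : Lp ℂ 2 ν) : ℝ → ℂ) x = ch u x from h1, RCLike.inner_apply', mul_comm]

lemma eL_norm_sq (ν : Measure ℝ) [IsProbabilityMeasure ν] (u : ℝ) : ‖eL ν u‖ ^ 2 = 1 := by
  have h := inner_eL ν u u
  rw [sub_self, A_zero, @inner_self_eq_norm_sq_to_K ℂ] at h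
  exact Complex.ofReal_injective (by push_cast; exact h)

theorem convolution_orthogonal_not_spectrum
    (μ₁ μ₂ : Measure ℝ) [IsProbabilityMeasure μ₁] [IsProbabilityMeasure μ₂]
    (hc₁ : ∃ K : Set ℝ, IsCompact K ∧ μ₁ Kᶜ = 0)
    (hc₂ : ∃ K : Set ℝ, IsCompact K ∧ μ₂ Kᶜ = 0)
    (hd₁ : ∀ x : ℝ, μ₁ ≠ Measure.dirac x) (hd₂ : ∀ x : ℝ, μ₂ ≠ Measure.dirac x)
    (Λ : Set ℝ) (hcount : Λ.Countable) (h0 : (0 : ℝ) ∈ Λ)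
    (horth : ∀ lam₁ ∈ Λ, ∀ lam₂ ∈ Λ, lam₁ ≠ lam₂ →
      (∫ x : ℝ, Complex.exp (2 * Real.pi * Complex.I * ((lam₁ - lam₂) * x)) ∂μ₁) = 0) :
    (∀ lam₁ ∈ Λ, ∀ lam₂ ∈ Λ, lam₁ ≠ lam₂ →
      (∫ x : ℝ, Complex.exp (2 * Real.pi * Complex.I * ((lam₁ - lam₂) * x))
        ∂(μ₁.conv μ₂)) = 0) ∧
    (∃ f : ℝ → ℂ, MemLp f 2 (μ₁.conv μ₂) ∧ ¬ (f =ᵐ[μ₁.conv μ₂] 0) ∧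
      ∀ lam ∈ Λ, (∫ x : ℝ, f x *
        (starRingEnd ℂ) (Complex.exp (2 * Real.pi * Complex.I * (lam * x)))
          ∂(μ₁.conv μ₂)) = 0) := by
  -- reformulate the orthogonality hypothesis in terms of `A`
  have hA1 : ∀ a ∈ Λ, ∀ b ∈ Λ, a ≠ b → A μ₁ (a - b) = 0 := by
    intro a ha b hb hab
    have := horth a ha b hb hab
    rw [A]
    simp only [ch, Complex.ofReal_sub]
    exact this
  have hAconv : ∀ a ∈ Λ, ∀ b ∈ Λ, a ≠ b → A (μ₁.conv μ₂) (a - b) = 0 := by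
    intro a ha b hb hab
    rw [A_conv, hA1 a ha b hb hab, zero_mul]
  constructor
  · intro lam₁ h₁ lam₂ h₂ hne
    have := hAconv lam₁ h₁ lam₂ h₂ hne
    rw [A] at this
    simp only [ch, Complex.ofReal_sub] at this
    exact this
  · set μ := μ₁.conv μ₂ with hμ
    by_contra hcon
    push_neg at hcon
    -- orthonormal families
    set v : Λ → Lp ℂ 2 μ := fun i => eL μ i with hv
    set v₁ : Λ → Lp ℂ 2 μ₁ := fun i => eL μ₁ i with hv₁
    have honμ : Orthonormal ℂ v := by
      rw [orthonormal_iff_ite]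
      intro i j
      rw [hv]
      simp only
      rw [inner_eL]
      by_cases hij : i = j
      · simp [hij, sub_self, A_zero]
      · have : (j : ℝ) ≠ (i : ℝ) := fun h => hij (Subtype.ext h.symm)
        rw [if_neg hij, hAconv j j.2 i i.2 this]
    have hon₁ : Orthonormal ℂ v₁ := by
      rw [orthonormal_iff_ite]
      intro i j
      rw [hv₁]
      simp only
      rw [inner_eL]
      by_cases hij : i = j
      · simp [hij, sub_self, A_zero]
      · have : (j : ℝ) ≠ (i : ℝ) := fun h => hij (Subtype.ext h.symm)
        rw [if_neg hij, hA1 j j.2 i i.2 this]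
    -- the span of v is dense
    have hbot : (Submodule.span ℂ (Set.range v))ᗮ = ⊥ := by
      rw [Submodule.eq_bot_iff]
      intro g hg
      have hzero : ∀ i : Λ, (inner ℂ (v i) g : ℂ) = 0 := fun i =>
        (Submodule.mem_orthogonal _ g).mp hg _ (Submodule.subset_span (Set.mem_range_self i))
      have hint : ∀ lam ∈ Λ, ∫ x, (g : ℝ → ℂ) x * (starRingEnd ℂ) (ch lam x) ∂μ = 0 := by
        intro lam hl
        rw [← inner_eL_g]
        exact hzero ⟨lam, hl⟩
      by_contra hgne
      have hne0 : ¬((g : ℝ → ℂ) =ᵐ[μ] 0) := fun h => hgne (Lp.eq_zero_iff_ae_eq_zero.mpr h)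
      exact absurd (hint) (by
        have := hcon (g : ℝ → ℂ) (Lp.memLp g) hne0
        obtain ⟨lam, hlam, hne⟩ := this
        intro hall
        exact hne (hall lam hlam))
    have hdense : (Submodule.span ℂ (Set.range v)).topologicalClosure = ⊤ :=
      Submodule.topologicalClosure_eq_top_iff.mpr hbot
    let b : HilbertBasis Λ ℂ (Lp ℂ 2 μ) := HilbertBasis.mk honμ (le_of_eq hdense.symm)
    -- key step : Parseval + Bessel
    have key : ∀ t : ℝ, A μ₁ t ≠ 0 → ‖A μ₂ t‖ = 1 := by
      intro t hA1t
      have hsum := b.hasSum_inner_mul_inner (eL μ t) (eL μ t)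
      have hcoe : ∀ i : Λ, b i = v i := fun i => by
        rw [show b = HilbertBasis.mk honμ (le_of_eq hdense.symm) from rfl, HilbertBasis.coe_mk]
      have hsum2 : HasSum (fun i : Λ => ((‖A μ (t - i)‖ ^ 2 : ℝ) : ℂ)) 1 := by
        have h1 : ∀ i : Λ, (inner ℂ (eL μ t) (b i) : ℂ) * (inner ℂ (b i) (eL μ t) : ℂ)
            = ((‖A μ (t - i)‖ ^ 2 : ℝ) : ℂ) := by
          intro i
          rw [hcoe i, hv]
          simp only
          rw [inner_eL, inner_eL]
          have : ((i : ℝ) - t) = -(t - i) := by ring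
          rw [this, A_neg, mul_comm, Complex.mul_conj, Complex.normSq_eq_norm_sq]
        have h2 : (inner ℂ (eL μ t) (eL μ t) : ℂ) = 1 := by
          rw [inner_eL, sub_self, A_zero]
        have h3 : (fun i : Λ => (inner ℂ (eL μ t) (b i) : ℂ) * inner ℂ (b i) (eL μ t))
            = fun i : Λ => ((‖A μ (t - i)‖ ^ 2 : ℝ) : ℂ) := funext h1
        rw [← h2, ← h3]
        exact hsum
      have hsumR : HasSum (fun i : Λ => ‖A μ (t - i)‖ ^ 2) 1 := by
        have hm := hsum2.mapL Complex.reCLM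
        simpa [← Complex.ofReal_pow] using hm
      have hinner₁ : ∀ i : Λ, (inner ℂ (v₁ i) (eL μ₁ t) : ℂ) = A μ₁ (t - i) := fun i => by
        rw [hv₁]; exact inner_eL μ₁ i t
      have hsummable : Summable (fun i : Λ => ‖A μ₁ (t - i)‖ ^ 2) := by
        have hs := hon₁.inner_products_summable (eL μ₁ t)
        refine hs.congr fun i => ?_
        rw [hinner₁ i]
      have htsum_le : ∑' i : Λ, ‖A μ₁ (t - i)‖ ^ 2 ≤ 1 := by
        have h := Orthonormal.tsum_inner_products_le (eL μ₁ t) hon₁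
        rw [eL_norm_sq] at h
        calc ∑' i : Λ, ‖A μ₁ (t - i)‖ ^ 2
            = ∑' i : Λ, ‖(inner ℂ (v₁ i) (eL μ₁ t) : ℂ)‖ ^ 2 :=
              tsum_congr fun i => by rw [hinner₁ i]
        _ ≤ 1 := h
      set a : Λ → ℝ := fun i => ‖A μ₁ (t - i)‖ ^ 2 with ha
      set bb : Λ → ℝ := fun i => ‖A μ₂ (t - i)‖ ^ 2 with hbb
      have hab : (fun i : Λ => ‖A μ (t - i)‖ ^ 2) = fun i => a i * bb i := by
        funext i
        rw [hμ, A_conv, norm_mul, mul_pow]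
      have hsumAB : HasSum (fun i : Λ => a i * bb i) 1 := by rw [← hab]; exact hsumR
      have ha_nonneg : ∀ i, 0 ≤ a i := fun i => by positivity
      have hbb_le : ∀ i, bb i ≤ 1 := fun i =>
        pow_le_one₀ (norm_nonneg _) (A_norm_le _ _)
      have hg_nonneg : ∀ i, 0 ≤ a i * (1 - bb i) := fun i =>
        mul_nonneg (ha_nonneg i) (by linarith [hbb_le i])
      have hdiff : (fun i : Λ => a i * (1 - bb i)) = fun i => a i - a i * bb i := by
        funext i; ring
      have hg_summable : Summable (fun i : Λ => a i * (1 - bb i)) := by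
        rw [hdiff]; exact hsummable.sub hsumAB.summable
      have htsum_g : ∑' i : Λ, a i * (1 - bb i) ≤ 0 := by
        rw [hdiff, Summable.tsum_sub hsummable hsumAB.summable, hsumAB.tsum_eq]
        linarith
      set i₀ : Λ := ⟨0, h0⟩ with hi₀
      have hle0 : a i₀ * (1 - bb i₀) ≤ 0 :=
        le_trans (Summable.le_tsum hg_summable i₀ fun j _ => hg_nonneg j) htsum_g
      have heq0 : a i₀ * (1 - bb i₀) = 0 := le_antisymm hle0 (hg_nonneg i₀)
      have hbb0 : bb i₀ = 1 := by
        rcases mul_eq_zero.mp heq0 with h | h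
        · exfalso
          apply hA1t
          have h' : ‖A μ₁ (t - ((i₀ : Λ) : ℝ))‖ ^ 2 = 0 := h
          rw [show ((i₀ : Λ) : ℝ) = 0 from rfl, sub_zero] at h'
          exact norm_eq_zero.mp ((pow_eq_zero_iff (two_ne_zero)).mp h')
        · linarith
      have hbb0' : ‖A μ₂ t‖ ^ 2 = 1 := by
        have h' : ‖A μ₂ (t - ((i₀ : Λ) : ℝ))‖ ^ 2 = 1 := hbb0
        rwa [show ((i₀ : Λ) : ℝ) = 0 from rfl, sub_zero] at h'
      have hfac : (‖A μ₂ t‖ - 1) * (‖A μ₂ t‖ + 1) = 0 := by nlinarith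
      rcases mul_eq_zero.mp hfac with h | h
      · linarith
      · linarith [norm_nonneg (A μ₂ t)]
    -- continuity gives a neighbourhood of 0 where A μ₁ does not vanish
    have hev : ∀ᶠ t in nhds (0:ℝ), A μ₁ t ≠ 0 :=
      (A_continuousAt μ₁).eventually_ne (by rw [A_zero]; exact one_ne_zero)
    obtain ⟨δ, hδpos, hδ⟩ := Metric.eventually_nhds_iff.mp hev
    have hsqrt2_pos : 0 < Real.sqrt 2 := Real.sqrt_pos.mpr (by norm_num)
    have hsqrt2_lt : Real.sqrt 2 < 2 := by
      nlinarith [Real.sq_sqrt (by norm_num : (0:ℝ) ≤ 2), Real.sqrt_nonneg 2]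
    set u₁ : ℝ := δ / 2 with hu₁def
    set u₂ : ℝ := δ / 2 * (Real.sqrt 2 / 2) with hu₂def
    have hu₁pos : 0 < u₁ := by rw [hu₁def]; linarith
    have hu₂pos : 0 < u₂ := by rw [hu₂def]; positivity
    have hd₁' : dist u₁ 0 < δ := by
      rw [Real.dist_eq, sub_zero, abs_of_pos hu₁pos, hu₁def]; linarith
    have hd₂' : dist u₂ 0 < δ := by
      rw [Real.dist_eq, sub_zero, abs_of_pos hu₂pos, hu₂def]; nlinarith
    have hk₁ := key u₁ (hδ hd₁')
    have hk₂ := key u₂ (hδ hd₂')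
    have hae₁ := ae_const_of_norm_A_eq_one (ν := μ₂) hk₁
    have hae₂ := ae_const_of_norm_A_eq_one (ν := μ₂) hk₂
    haveI : (ae μ₂).NeBot := ae_neBot.mpr (IsProbabilityMeasure.ne_zero μ₂)
    obtain ⟨x₀, hx₁, hx₂⟩ := (hae₁.and hae₂).exists
    apply hd₂ x₀
    apply eq_dirac_of_compl_singleton
    have hsub : {x : ℝ | ch u₁ x = A μ₂ u₁ ∧ ch u₂ x = A μ₂ u₂} ⊆ {x₀} := by
      rintro x ⟨hx1', hx2'⟩
      obtain ⟨m, hm⟩ := ch_eq_iff (u := u₁) (hx1'.trans hx₁.symm)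
      obtain ⟨n, hn⟩ := ch_eq_iff (u := u₂) (hx2'.trans hx₂.symm)
      simp only [Set.mem_singleton_iff]
      by_contra hne
      have hs : x - x₀ ≠ 0 := sub_ne_zero.mpr hne
      have hm0 : (m:ℝ) ≠ 0 := by
        rw [← hm]; exact mul_ne_zero (ne_of_gt hu₁pos) hs
      have h2 : u₂ * (x - x₀) = u₁ * (x - x₀) * (Real.sqrt 2 / 2) := by
        rw [hu₂def, hu₁def]; ring
      rw [hm, hn] at h2
      have hrepr : Real.sqrt 2 = 2 * (n:ℝ) / (m:ℝ) := by
        field_simp at h2 ⊢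
        linarith
      apply irrational_sqrt_two
      rw [hrepr]
      exact ⟨2 * (n:ℚ) / (m:ℚ), by push_cast; ring⟩
    have hP : ∀ᵐ x ∂μ₂, x ∈ {x : ℝ | ch u₁ x = A μ₂ u₁ ∧ ch u₂ x = A μ₂ u₂} := by
      filter_upwards [hae₁, hae₂] with x h1 h2
      exact ⟨h1, h2⟩
    have hP0 : μ₂ {x : ℝ | ch u₁ x = A μ₂ u₁ ∧ ch u₂ x = A μ₂ u₂}ᶜ = 0 := by
      have := ae_iff.mp hP
      simpa [Set.compl_setOf] using this
    exact measure_mono_null (Set.compl_subset_compl.mpr hsub) hP0
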